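/- Let P be the Petersen graph and M a perfect matching of P. In the multigraph P' obtained from P by duplicating the edges of M (adding one parallel copy of each edge of M), if N_1 and N_2 are two edge-disjoint perfect matchings of P', then at least one of N_1, N_2 projects to the matching M in P. -/

import Mathlib

/-- The vertex type of the Petersen graph, realized as the Kneser graph K(5,2). -/
abbrev PetersenV : Type := {s : Finset (Fin 5) // s.card = 2}

/-- The Petersen graph as the Kneser graph K(5,2). -/
def petersen : SimpleGraph PetersenV where
  Adj a b := Disjoint a.1 b.1
  symm := ⟨fun _ _ h => h.symm⟩
  loopless := by
    refine ⟨?_⟩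
    intro a h
    have h0 : a.1 = ⊥ := disjoint_self.mp h
    have h2 := a.2
    rw [h0] at h2
    simp at h2

instance : DecidableRel petersen.Adj :=
  fun a b => inferInstanceAs (Decidable (Disjoint a.1 b.1))

/-- Perfect matching of the (simple) Petersen graph, as a finite edge set. -/
def IsPM (m : Finset (Sym2 PetersenV)) : Prop :=
  (↑m ⊆ petersen.edgeSet) ∧ ∀ v : PetersenV, ∃! e, e ∈ m ∧ v ∈ e

/-- `m` is a perfect matching of the multigraph whose edge multiset is `E`:
a sub-multiset of `E` in which every vertex lies in exactly one edge
(counted with multiplicity). -/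
def IsPMOf (E m : Multiset (Sym2 PetersenV)) : Prop :=
  m ≤ E ∧ ∀ v : PetersenV, (m.filter (fun e => v ∈ e)).card = 1

def v01 : PetersenV := ⟨{0,1}, by decide⟩
def v02 : PetersenV := ⟨{0,2}, by decide⟩
def v03 : PetersenV := ⟨{0,3}, by decide⟩
def v04 : PetersenV := ⟨{0,4}, by decide⟩
def v12 : PetersenV := ⟨{1,2}, by decide⟩
def v13 : PetersenV := ⟨{1,3}, by decide⟩
def v14 : PetersenV := ⟨{1,4}, by decide⟩
def v23 : PetersenV := ⟨{2,3}, by decide⟩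
def v24 : PetersenV := ⟨{2,4}, by decide⟩
def v34 : PetersenV := ⟨{3,4}, by decide⟩
def e0 : Sym2 PetersenV := s(v01, v23)
def e1 : Sym2 PetersenV := s(v01, v24)
def e2 : Sym2 PetersenV := s(v01, v34)
def e3 : Sym2 PetersenV := s(v02, v13)
def e4 : Sym2 PetersenV := s(v02, v14)
def e5 : Sym2 PetersenV := s(v02, v34)
def e6 : Sym2 PetersenV := s(v03, v12)
def e7 : Sym2 PetersenV := s(v03, v14)
def e8 : Sym2 PetersenV := s(v03, v24)
def e9 : Sym2 PetersenV := s(v04, v12)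
def e10 : Sym2 PetersenV := s(v04, v13)
def e11 : Sym2 PetersenV := s(v04, v23)
def e12 : Sym2 PetersenV := s(v12, v34)
def e13 : Sym2 PetersenV := s(v13, v24)
def e14 : Sym2 PetersenV := s(v14, v23)
def allEdges : Finset (Sym2 PetersenV) := {e0, e1, e2, e3, e4, e5, e6, e7, e8, e9, e10, e11, e12, e13, e14}
def M1 : Finset (Sym2 PetersenV) := {e0, e4, e8, e10, e12}
def M2 : Finset (Sym2 PetersenV) := {e0, e5, e7, e9, e13}
def M3 : Finset (Sym2 PetersenV) := {e1, e3, e7, e11, e12}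
def M4 : Finset (Sym2 PetersenV) := {e1, e5, e6, e10, e14}
def M5 : Finset (Sym2 PetersenV) := {e2, e3, e8, e9, e14}
def M6 : Finset (Sym2 PetersenV) := {e2, e4, e6, e11, e13}

def sixL : Finset (Finset (Sym2 PetersenV)) := {M1, M2, M3, M4, M5, M6}

def exactlyOne (x y z : Bool) : Bool :=
  (x && !y && !z) || (!x && y && !z) || (!x && !y && z)

set_option maxRecDepth 100000 in
lemma core : ∀ b0 b1 b2 b3 b4 b5 b6 b7 b8 b9 b10 b11 b12 b13 b14 : Bool,
    (exactlyOne b0 b1 b2 && exactlyOne b3 b4 b5 && exactlyOne b6 b7 b8 && exactlyOne b9 b10 b11 && exactlyOne b6 b9 b12 && exactlyOne b3 b10 b13 && exactlyOne b4 b7 b14 && exactlyOne b0 b11 b14 && exactlyOne b1 b8 b13 && exactlyOne b2 b5 b12) = true →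
    (((b0 == true) && (b1 == false) && (b2 == false) && (b3 == false) && (b4 == true) && (b5 == false) && (b6 == false) && (b7 == false) && (b8 == true) && (b9 == false) && (b10 == true) && (b11 == false) && (b12 == true) && (b13 == false) && (b14 == false)) || ((b0 == true) && (b1 == false) && (b2 == false) && (b3 == false) && (b4 == false) && (b5 == true) && (b6 == false) && (b7 == true) && (b8 == false) && (b9 == true) && (b10 == false) && (b11 == false) && (b12 == false) && (b13 == true) && (b14 == false)) || ((b0 == false) && (b1 == true) && (b2 == false) && (b3 == true) && (b4 == false) && (b5 == false) && (b6 == false) && (b7 == true) && (b8 == false) && (b9 == false) && (b10 == false) && (b11 == true) && (b12 == true) && (b13 == false) && (b14 == false)) || ((b0 == false) && (b1 == true) && (b2 == false) && (b3 == false) && (b4 == false) && (b5 == true) && (b6 == true) && (b7 == false) && (b8 == false) && (b9 == false) && (b10 == true) && (b11 == false) && (b12 == false) && (b13 == false) && (b14 == true)) || ((b0 == false) && (b1 == false) && (b2 == true) && (b3 == true) && (b4 == false) && (b5 == false) && (b6 == false) && (b7 == false) && (b8 == true) && (b9 == true) && (b10 == false) && (b11 == false) && (b12 == false) && (b13 ==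 false) && (b14 == true)) || ((b0 == false) && (b1 == false) && (b2 == true) && (b3 == false) && (b4 == true) && (b5 == false) && (b6 == true) && (b7 == false) && (b8 == false) && (b9 == false) && (b10 == false) && (b11 == true) && (b12 == false) && (b13 == true) && (b14 == false))) = true := by decide

set_option maxRecDepth 10000 in
lemma edge_sub : ∀ e ∈ petersen.edgeFinset, e ∈ allEdges := by decide

lemma vertexCase {m : Finset (Sym2 PetersenV)} (hsub : m ⊆ allEdges) {v : PetersenV}
    {a b c : Sym2 PetersenV}
    (hab : a ≠ b) (hac : a ≠ c) (hbc : b ≠ c)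
    (hva : v ∈ a) (hvb : v ∈ b) (hvc : v ∈ c)
    (honly : ∀ e ∈ allEdges, v ∈ e → e = a ∨ e = b ∨ e = c)
    (h : ∃! e, e ∈ m ∧ v ∈ e) :
    exactlyOne (decide (a ∈ m)) (decide (b ∈ m)) (decide (c ∈ m)) = true := by
  obtain ⟨e, ⟨hm, hv⟩, hu⟩ := h
  simp only [exactlyOne, Bool.or_eq_true, Bool.and_eq_true, Bool.not_eq_true',
    decide_eq_true_eq, decide_eq_false_iff_not, and_assoc, or_assoc]
  rcases honly e (hsub hm) hv with rfl | rfl | rfl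
  · exact Or.inl ⟨hm, fun hb => hab (hu b ⟨hb, hvb⟩).symm,
      fun hc => hac (hu c ⟨hc, hvc⟩).symm⟩
  · exact Or.inr (Or.inl ⟨fun ha => hab (hu a ⟨ha, hva⟩), hm,
      fun hc => hbc (hu c ⟨hc, hvc⟩).symm⟩)
  · exact Or.inr (Or.inr ⟨fun ha => hac (hu a ⟨ha, hva⟩),
      fun hb => hbc (hu b ⟨hb, hvb⟩), hm⟩)

lemma classify {m : Finset (Sym2 PetersenV)} (h : IsPM m) :
    m = M1 ∨ m = M2 ∨ m = M3 ∨ m = M4 ∨ m = M5 ∨ m = M6 := by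
  obtain ⟨hsub, huniq⟩ := h
  have hsub' : m ⊆ allEdges := fun e he =>
    edge_sub e (SimpleGraph.mem_edgeFinset.mpr (hsub (Finset.mem_coe.mpr he)))
  have hv01 : exactlyOne (decide (e0 ∈ m)) (decide (e1 ∈ m)) (decide (e2 ∈ m)) = true :=
    vertexCase hsub' (by decide) (by decide) (by decide) (by decide) (by decide)
      (by decide) (by decide) (huniq v01)
  have hv02 : exactlyOne (decide (e3 ∈ m)) (decide (e4 ∈ m)) (decide (e5 ∈ m)) = true :=
    vertexCase hsub' (by decide) (by decide) (by decide) (by decide) (by decide)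
      (by decide) (by decide) (huniq v02)
  have hv03 : exactlyOne (decide (e6 ∈ m)) (decide (e7 ∈ m)) (decide (e8 ∈ m)) = true :=
    vertexCase hsub' (by decide) (by decide) (by decide) (by decide) (by decide)
      (by decide) (by decide) (huniq v03)
  have hv04 : exactlyOne (decide (e9 ∈ m)) (decide (e10 ∈ m)) (decide (e11 ∈ m)) = true :=
    vertexCase hsub' (by decide) (by decide) (by decide) (by decide) (by decide)
      (by decide) (by decide) (huniq v04)
  have hv12 : exactlyOne (decide (e6 ∈ m)) (decide (e9 ∈ m)) (decide (e12 ∈ m)) = true :=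
    vertexCase hsub' (by decide) (by decide) (by decide) (by decide) (by decide)
      (by decide) (by decide) (huniq v12)
  have hv13 : exactlyOne (decide (e3 ∈ m)) (decide (e10 ∈ m)) (decide (e13 ∈ m)) = true :=
    vertexCase hsub' (by decide) (by decide) (by decide) (by decide) (by decide)
      (by decide) (by decide) (huniq v13)
  have hv14 : exactlyOne (decide (e4 ∈ m)) (decide (e7 ∈ m)) (decide (e14 ∈ m)) = true :=
    vertexCase hsub' (by decide) (by decide) (by decide) (by decide) (by decide)
      (by decide) (by decide) (huniq v14)
  have hv23 : exactlyOne (decide (e0 ∈ m)) (decide (e11 ∈ m)) (decide (e14 ∈ m)) = true :=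
    vertexCase hsub' (by decide) (by decide) (by decide) (by decide) (by decide)
      (by decide) (by decide) (huniq v23)
  have hv24 : exactlyOne (decide (e1 ∈ m)) (decide (e8 ∈ m)) (decide (e13 ∈ m)) = true :=
    vertexCase hsub' (by decide) (by decide) (by decide) (by decide) (by decide)
      (by decide) (by decide) (huniq v24)
  have hv34 : exactlyOne (decide (e2 ∈ m)) (decide (e5 ∈ m)) (decide (e12 ∈ m)) = true :=
    vertexCase hsub' (by decide) (by decide) (by decide) (by decide) (by decide)
      (by decide) (by decide) (huniq v34)
  have hc := core (decide (e0 ∈ m)) (decide (e1 ∈ m)) (decide (e2 ∈ m)) (decide (e3 ∈ m))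
    (decide (e4 ∈ m)) (decide (e5 ∈ m)) (decide (e6 ∈ m)) (decide (e7 ∈ m))
    (decide (e8 ∈ m)) (decide (e9 ∈ m)) (decide (e10 ∈ m)) (decide (e11 ∈ m))
    (decide (e12 ∈ m)) (decide (e13 ∈ m)) (decide (e14 ∈ m))
    (by rw [hv01, hv02, hv03, hv04, hv12, hv13, hv14, hv23, hv24, hv34]; rfl)
  have hm0 : m = allEdges.filter (fun e => e ∈ m) := by
    rw [Finset.filter_mem_eq_inter, Finset.inter_eq_right.mpr hsub']
  simp only [Bool.or_eq_true, Bool.and_eq_true, beq_iff_eq, decide_eq_true_eq,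
    decide_eq_false_iff_not, and_assoc, or_assoc] at hc
  rcases hc with h | h | h | h | h | h
  · refine Or.inl ?_
    obtain ⟨q0, q1, q2, q3, q4, q5, q6, q7, q8, q9, q10, q11, q12, q13, q14⟩ := h
    rw [hm0]
    simp only [allEdges, Finset.filter_insert, Finset.filter_singleton,
      q0, q1, q2, q3, q4, q5, q6, q7, q8, q9, q10, q11, q12, q13, q14,
      if_true, if_false, ite_true, ite_false]
    decide
  · refine Or.inr (Or.inl ?_)
    obtain ⟨q0, q1, q2, q3, q4, q5, q6, q7, q8, q9, q10, q11, q12, q13, q14⟩ := h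
    rw [hm0]
    simp only [allEdges, Finset.filter_insert, Finset.filter_singleton,
      q0, q1, q2, q3, q4, q5, q6, q7, q8, q9, q10, q11, q12, q13, q14,
      if_true, if_false, ite_true, ite_false]
    decide
  · refine Or.inr (Or.inr (Or.inl ?_))
    obtain ⟨q0, q1, q2, q3, q4, q5, q6, q7, q8, q9, q10, q11, q12, q13, q14⟩ := h
    rw [hm0]
    simp only [allEdges, Finset.filter_insert, Finset.filter_singleton,
      q0, q1, q2, q3, q4, q5, q6, q7, q8, q9, q10, q11, q12, q13, q14,
      if_true, if_false, ite_true, ite_false]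
    decide
  · refine Or.inr (Or.inr (Or.inr (Or.inl ?_)))
    obtain ⟨q0, q1, q2, q3, q4, q5, q6, q7, q8, q9, q10, q11, q12, q13, q14⟩ := h
    rw [hm0]
    simp only [allEdges, Finset.filter_insert, Finset.filter_singleton,
      q0, q1, q2, q3, q4, q5, q6, q7, q8, q9, q10, q11, q12, q13, q14,
      if_true, if_false, ite_true, ite_false]
    decide
  · refine Or.inr (Or.inr (Or.inr (Or.inr (Or.inl ?_))))
    obtain ⟨q0, q1, q2, q3, q4, q5, q6, q7, q8, q9, q10, q11, q12, q13, q14⟩ := h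
    rw [hm0]
    simp only [allEdges, Finset.filter_insert, Finset.filter_singleton,
      q0, q1, q2, q3, q4, q5, q6, q7, q8, q9, q10, q11, q12, q13, q14,
      if_true, if_false, ite_true, ite_false]
    decide
  · refine Or.inr (Or.inr (Or.inr (Or.inr (Or.inr ?_))))
    obtain ⟨q0, q1, q2, q3, q4, q5, q6, q7, q8, q9, q10, q11, q12, q13, q14⟩ := h
    rw [hm0]
    simp only [allEdges, Finset.filter_insert, Finset.filter_singleton,
      q0, q1, q2, q3, q4, q5, q6, q7, q8, q9, q10, q11, q12, q13, q14,
      if_true, if_false, ite_true, ite_false]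
    decide

lemma mem_sixL {m : Finset (Sym2 PetersenV)} (h : IsPM m) : m ∈ sixL := by
  rcases classify h with rfl | rfl | rfl | rfl | rfl | rfl <;> simp [sixL]

set_option maxRecDepth 10000 in
lemma factB : ∀ A ∈ sixL, ∀ B ∈ sixL, (A ∩ B).Nonempty := by
  intro A hA B hB
  fin_cases hA <;> fin_cases hB <;> decide

set_option maxRecDepth 10000 in
lemma factA : ∀ A ∈ sixL, ∀ B ∈ sixL, ∀ C ∈ sixL,
    A = B ∨ A = C ∨ B = C ∨ A ∩ B ∩ C = ∅ := by
  intro A hA B hB C hC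
  fin_cases hA <;> fin_cases hB <;> fin_cases hC <;> decide

lemma pm_subset {A B : Finset (Sym2 PetersenV)} (hA : IsPM A) (hB : IsPM B)
    (h : A ⊆ B) : A = B := by
  refine Finset.Subset.antisymm h fun e he => ?_
  induction e using Sym2.ind with
  | _ x y =>
    obtain ⟨f, ⟨hfA, hvf⟩, _⟩ := hA.2 x
    obtain ⟨g, ⟨hgB, hvg⟩, hu⟩ := hB.2 x
    have h1 : s(x, y) = g := hu _ ⟨he, Sym2.mem_mk_left x y⟩
    have h2 : f = g := hu _ ⟨h hfA, hvf⟩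
    rw [h1, ← h2]
    exact hfA

lemma toFinset_pm {M : Finset (Sym2 PetersenV)} (hM : IsPM M)
    {E N : Multiset (Sym2 PetersenV)} (hE : E = petersen.edgeFinset.val + M.val)
    (h : IsPMOf E N) : IsPM N.toFinset := by
  constructor
  · intro e he
    have heN : e ∈ N := Multiset.mem_toFinset.mp he
    have heE : e ∈ E := Multiset.mem_of_le h.1 heN
    rw [hE, Multiset.mem_add] at heE
    rcases heE with h' | h'
    · exact SimpleGraph.mem_edgeFinset.mp h'
    · exact hM.1 (Finset.mem_coe.mpr h')
  · intro v
    have hc := h.2 v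
    obtain ⟨e, hfe⟩ := Multiset.card_eq_one.mp hc
    have he' : e ∈ N.filter (fun e => v ∈ e) := hfe ▸ Multiset.mem_singleton_self e
    rw [Multiset.mem_filter] at he'
    refine ⟨e, ⟨Multiset.mem_toFinset.mpr he'.1, he'.2⟩, fun y hy => ?_⟩
    have : y ∈ N.filter (fun e => v ∈ e) :=
      Multiset.mem_filter.mpr ⟨Multiset.mem_toFinset.mp hy.1, hy.2⟩
    rw [hfe] at this
    exact Multiset.mem_singleton.mp this

/-- Rizzi: if `M` is a perfect matching of the Petersen graph `P` and `P'` is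
the multigraph obtained from `P` by adding a parallel copy of each edge of
`M`, then for any two edge-disjoint perfect matchings `N₁, N₂` of `P'`,
at least one of them projects to `M`. -/
theorem petersen_plus_matching_disjoint_pms
    (M : Finset (Sym2 PetersenV)) (hM : IsPM M)
    (E : Multiset (Sym2 PetersenV)) (hE : E = petersen.edgeFinset.val + M.val)
    (N₁ N₂ : Multiset (Sym2 PetersenV))
    (h₁ : IsPMOf E N₁) (h₂ : IsPMOf E N₂) (hdisj : N₁ + N₂ ≤ E) :
    N₁.toFinset = M ∨ N₂.toFinset = M := by
  have hA : IsPM N₁.toFinset := toFinset_pm hM hE h₁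
  have hB : IsPM N₂.toFinset := toFinset_pm hM hE h₂
  have hinterM : ∀ e, e ∈ N₁.toFinset → e ∈ N₂.toFinset → e ∈ M := by
    intro e h1 h2
    have c1 : 1 ≤ N₁.count e := Multiset.one_le_count_iff_mem.mpr (Multiset.mem_toFinset.mp h1)
    have c2 : 1 ≤ N₂.count e := Multiset.one_le_count_iff_mem.mpr (Multiset.mem_toFinset.mp h2)
    have hle := Multiset.le_iff_count.mp hdisj e
    rw [Multiset.count_add] at hle
    rw [hE, Multiset.count_add] at hle
    have hpe : petersen.edgeFinset.val.count e ≤ 1 :=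
      Multiset.nodup_iff_count_le_one.mp petersen.edgeFinset.nodup e
    have : 1 ≤ M.val.count e := by omega
    exact Multiset.one_le_count_iff_mem.mp this
  by_contra hcon
  push_neg at hcon
  obtain ⟨hne1, hne2⟩ := hcon
  by_cases heq : N₁.toFinset = N₂.toFinset
  · have hsub : N₁.toFinset ⊆ M := fun e he => hinterM e he (heq ▸ he)
    exact hne1 (pm_subset hA hM hsub)
  · obtain ⟨e, he⟩ := factB _ (mem_sixL hA) _ (mem_sixL hB)
    rw [Finset.mem_inter] at he
    have heM : e ∈ M := hinterM e he.1 he.2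
    rcases factA _ (mem_sixL hA) _ (mem_sixL hB) _ (mem_sixL hM) with h' | h' | h' | h'
    · exact heq h'
    · exact hne1 h'
    · exact hne2 h'
    · have : e ∈ (∅ : Finset (Sym2 PetersenV)) :=
        h' ▸ (Finset.mem_inter.mpr ⟨Finset.mem_inter.mpr he, heM⟩)
      simp at this
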